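/- Suppose φ, ψ : 𝓕 → 𝓔 are additive mappings such that ⟨φ(z), ψ(w)⟩ = 0 and a·⟨φ(z), φ(w)⟩·a* = (1−a)·⟨ψ(z), ψ(w)⟩·(1−a)* for all z, w ∈ 𝓕, and set 𝓚 := φ(𝓕) + ψ(𝓕) = {φ(x) + ψ(y) : x, y ∈ 𝓕}. If f : 𝓔 → 𝓖 is an odd orthogonally a-Jensen mapping (f(−x) = −f(x) for all x), then f is additive on 𝓚, i.e. f(z₁ + z₂) = f(z₁) + f(z₂) for all z₁, z₂ ∈ 𝓚. -/

import Mathlib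

open scoped RightActions

/-- The Hilbert C⋆-module class as it was in Mathlib of December 2024: `E` carries a *right*
`A`-module structure (an `Aᵐᵒᵖ`-action) and the inner product satisfies
`⟪x, y <• a⟫ = ⟪x, y⟫ * a`. -/
class CStarModuleRight (A E : Type*) [NonUnitalSemiring A] [StarRing A] [Module ℂ A]
    [AddCommGroup E] [Module ℂ E] [PartialOrder A] [SMul Aᵐᵒᵖ E] [Norm A] [Norm E]
    extends Inner A E where
  inner_add_right {x} {y} {z} : inner x (y + z) = inner x y + inner x z
  inner_self_nonneg {x} : 0 ≤ inner x x
  inner_self {x} : inner x x = 0 ↔ x = 0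
  inner_op_smul_right {a : A} {x y : E} : inner x (y <• a) = inner x y * a
  inner_smul_right_complex {z : ℂ} {x} {y} : inner x (z • y) = z • inner x y
  star_inner x y : star (inner x y) = inner y x
  norm_eq_sqrt_norm_inner_self x : ‖x‖ = √‖inner x x‖

variable {A : Type*} [CStarAlgebra A] [PartialOrder A] [StarOrderedRing A]
variable {E : Type*} [NormedAddCommGroup E] [Module ℂ E] [Module Aᵐᵒᵖ E] [CStarModuleRight A E]
variable {F : Type*} [NormedAddCommGroup F] [Module ℂ F] [Module Aᵐᵒᵖ F] [CStarModuleRight A F]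
variable {G : Type*} [NormedAddCommGroup G] [Module ℂ G] [Module Aᵐᵒᵖ G] [CStarModuleRight A G]

/-- A mapping `f : E → G` between inner product `A`-modules is *orthogonally `a`-Jensen* if
`⟪x, y⟫ = 0` implies `f (a·x + (1-a)·y) = a·f x + (1-a)·f y` (module actions written as right
actions `<•`, since `E`, `G` are right `A`-modules). -/
def OrthAJensen (a : A) (f : E → G) : Prop :=
  ∀ x y : E, inner (𝕜 := A) x y = 0 →
    f (x <• a + y <• (1 - a)) = f x <• a + f y <• (1 - a)

namespace CStarModuleRight

theorem inner_zero_right {x : E} : inner (𝕜 := A) x (0 : E) = 0 := by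
  have h : inner (𝕜 := A) x ((0 : E) + 0) = inner (𝕜 := A) x 0 + inner (𝕜 := A) x 0 :=
    CStarModuleRight.inner_add_right
  rw [add_zero] at h
  calc inner (𝕜 := A) x 0 = (inner (𝕜 := A) x 0 + inner (𝕜 := A) x 0) - inner (𝕜 := A) x 0 := by abel
    _ = inner (𝕜 := A) x 0 - inner (𝕜 := A) x 0 := by rw [← h]
    _ = 0 := sub_self _

theorem inner_zero_left {x : E} : inner (𝕜 := A) (0 : E) x = 0 := by
  rw [← CStarModuleRight.star_inner x (0 : E), inner_zero_right, star_zero]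

theorem inner_add_left {x y z : E} :
    inner (𝕜 := A) (x + y) z = inner (𝕜 := A) x z + inner (𝕜 := A) y z := by
  rw [← CStarModuleRight.star_inner z (x + y), CStarModuleRight.inner_add_right, star_add,
    CStarModuleRight.star_inner, CStarModuleRight.star_inner]

theorem inner_neg_right {x y : E} : inner (𝕜 := A) x (-y) = -inner (𝕜 := A) x y := by
  have h : inner (𝕜 := A) x (-y + y) = inner (𝕜 := A) x (-y) + inner (𝕜 := A) x y :=
    CStarModuleRight.inner_add_right
  rw [neg_add_cancel, inner_zero_right] at h
  exact eq_neg_of_add_eq_zero_left h.symm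

theorem inner_sub_right {x y z : E} :
    inner (𝕜 := A) x (y - z) = inner (𝕜 := A) x y - inner (𝕜 := A) x z := by
  rw [sub_eq_add_neg, CStarModuleRight.inner_add_right, inner_neg_right, ← sub_eq_add_neg]

theorem inner_op_smul_left {a : A} {x y : E} :
    inner (𝕜 := A) (x <• a) y = star a * inner (𝕜 := A) x y := by
  rw [← CStarModuleRight.star_inner y (x <• a), CStarModuleRight.inner_op_smul_right, star_mul,
    CStarModuleRight.star_inner]

end CStarModuleRight

/-- Proposition 2.4: an odd orthogonally `a`-Jensen mapping is additive on
`K = φ(F) + ψ(F)`. -/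
theorem odd_additive_on_K (a : A) [Invertible a] [Invertible (1 - a)] (φ ψ : F → E)
    (hφ : ∀ z w : F, φ (z + w) = φ z + φ w)
    (hψ : ∀ z w : F, ψ (z + w) = ψ z + ψ w)
    (horth : ∀ z w : F, inner (𝕜 := A) (φ z) (ψ w) = 0)
    (heq : ∀ z w : F,
      a * inner (𝕜 := A) (φ z) (φ w) * star a
        = (1 - a) * inner (𝕜 := A) (ψ z) (ψ w) * star (1 - a))
    (f : E → G) (hf : OrthAJensen a f) (hodd : ∀ x : E, f (-x) = -f x) :
    ∀ z₁ z₂ : E, (∃ x y : F, z₁ = φ x + ψ y) → (∃ x y : F, z₂ = φ x + ψ y) →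
      f (z₁ + z₂) = f z₁ + f z₂ := by
  classical
  -- basic helpers about the right action
  have hsmul : ∀ (x : E) (c d : A), (x <• c) <• d = x <• (c * d) := by
    intro x c d
    show MulOpposite.op d • MulOpposite.op c • x = MulOpposite.op (c * d) • x
    rw [smul_smul, ← MulOpposite.op_mul]
  have hone : ∀ x : E, x <• (1 : A) = x := by
    intro x
    show MulOpposite.op (1 : A) • x = x
    rw [MulOpposite.op_one, one_smul]
  -- cancellation by 2 in G
  have two_cancel : ∀ u v : G, u + u = v + v → u = v := by
    intro u v h
    have h2 : (2 : ℂ) • u = (2 : ℂ) • v := by rw [two_smul, two_smul]; exact h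
    calc u = ((2 : ℂ)⁻¹ * 2) • u := by norm_num
      _ = (2 : ℂ)⁻¹ • ((2 : ℂ) • u) := by rw [mul_smul]
      _ = (2 : ℂ)⁻¹ • ((2 : ℂ) • v) := by rw [h2]
      _ = ((2 : ℂ)⁻¹ * 2) • v := by rw [mul_smul]
      _ = v := by norm_num
  have hf0 : f 0 = 0 := by
    have h1 := hodd 0
    rw [neg_zero] at h1
    have h2 : f 0 + f 0 = 0 + 0 := by nth_rewrite 1 [h1]; rw [neg_add_cancel, add_zero]
    exact two_cancel _ _ h2
  -- f P = f (P <• ⅟a) <• a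
  have L0a : ∀ P : E, f P = f (P <• ⅟a) <• a := by
    intro P
    have key := hf (P <• ⅟a) 0 CStarModuleRight.inner_zero_right
    rw [hsmul, invOf_mul_self, hone] at key
    rw [show ((0 : E) <• (1 - a)) = 0 from smul_zero _, add_zero, hf0,
      show ((0 : G) <• (1 - a)) = 0 from smul_zero _, add_zero] at key
    exact key
  have L0b : ∀ Q : E, f Q = f (Q <• ⅟(1 - a)) <• (1 - a) := by
    intro Q
    have key := hf 0 (Q <• ⅟(1 - a)) CStarModuleRight.inner_zero_left
    rw [hsmul, invOf_mul_self, hone] at key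
    rw [show ((0 : E) <• a) = 0 from smul_zero _, zero_add, hf0,
      show ((0 : G) <• a) = 0 from smul_zero _, zero_add] at key
    exact key
  -- orthogonal additivity
  have L1 : ∀ P Q : E, inner (𝕜 := A) P Q = 0 → f (P + Q) = f P + f Q := by
    intro P Q h
    have horthPQ : inner (𝕜 := A) (P <• ⅟a) (Q <• ⅟(1 - a)) = 0 := by
      rw [CStarModuleRight.inner_op_smul_right, CStarModuleRight.inner_op_smul_left, h, mul_zero, zero_mul]
    have key := hf _ _ horthPQ
    rw [hsmul, hsmul, invOf_mul_self, invOf_mul_self, hone, hone] at key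
    rw [key, ← L0a, ← L0b]
  -- the symmetrization argument
  have Lgen : ∀ (α β : F → E), (∀ z w, inner (𝕜 := A) (α z) (β w) = 0) →
      (∀ z w, inner (𝕜 := A) (β z) (α w) = 0) →
      (∀ z w, inner (𝕜 := A) (α z) (α w) = inner (𝕜 := A) (β z) (β w)) →
      ∀ z w, f (α z + α w) = f (α z) + f (α w) := by
    intro α β hab hba haa z w
    have ouv : ∀ z' w', inner (𝕜 := A) (α z' + β z') (α w' - β w') = 0 := by
      intro z' w'
      rw [CStarModuleRight.inner_add_left, CStarModuleRight.inner_sub_right, CStarModuleRight.inner_sub_right, hab, hba, haa]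
      abel
    have oPQ : ∀ z' w' u' v', inner (𝕜 := A) (α z' + α w') (β u' - β v') = 0 := by
      intro z' w' u' v'
      rw [CStarModuleRight.inner_add_left, CStarModuleRight.inner_sub_right, CStarModuleRight.inner_sub_right, hab, hab, hab, hab]
      abel
    -- decompositions
    have d1 : ∀ z' w', f (α z' + β z' + (α w' - β w')) = f (α z') + f (β z') + (f (α w') - f (β w')) := by
      intro z' w'
      rw [L1 _ _ (ouv z' w'), L1 _ _ (hab z' z')]
      congr 1
      have : α w' - β w' = α w' + -(β w') := by abel
      rw [this, L1 _ _ (by rw [CStarModuleRight.inner_neg_right, hab, neg_zero]), hodd]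
      abel
    have e1 : α z + β z + (α w - β w) = (α z + α w) + (β z - β w) := by abel
    have e2 : α w + β w + (α z - β z) = (α z + α w) + -(β z - β w) := by abel
    have k1 : f ((α z + α w) + (β z - β w)) = f (α z) + f (β z) + (f (α w) - f (β w)) := by
      rw [← e1]; exact d1 z w
    have k2 : f ((α z + α w) + -(β z - β w)) = f (α w) + f (β w) + (f (α z) - f (β z)) := by
      rw [← e2]
      have := d1 w z
      rw [show α z - β z = -(β z - α z) from by abel] at this
      convert this using 2 <;> abel
    have s1 : f ((α z + α w) + (β z - β w)) = f (α z + α w) + f (β z - β w) :=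
      L1 _ _ (oPQ z w z w)
    have s2 : f ((α z + α w) + -(β z - β w)) = f (α z + α w) - f (β z - β w) := by
      rw [L1 _ _ (by rw [CStarModuleRight.inner_neg_right, oPQ, neg_zero]), hodd]
      abel
    have sum : f (α z + α w) + f (α z + α w)
        = (f (α z) + f (α w)) + (f (α z) + f (α w)) := by
      have := congrArg₂ (· + ·) (s1.symm.trans k1) (s2.symm.trans k2)
      calc f (α z + α w) + f (α z + α w)
          = (f (α z + α w) + f (β z - β w)) + (f (α z + α w) - f (β z - β w)) := by abel
        _ = (f (α z) + f (β z) + (f (α w) - f (β w)))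
            + (f (α w) + f (β w) + (f (α z) - f (β z))) := this
        _ = (f (α z) + f (α w)) + (f (α z) + f (α w)) := by abel
    exact two_cancel _ _ sum
  -- star inverses
  have hstara : star a * star ⅟a = 1 := by rw [← star_mul, invOf_mul_self, star_one]
  have hstarb : star (1 - a) * star ⅟(1 - a) = 1 := by
    rw [← star_mul, invOf_mul_self, star_one]
  have hψφ : ∀ z w : F, inner (𝕜 := A) (ψ z) (φ w) = 0 := by
    intro z w
    rw [← CStarModuleRight.star_inner, horth, star_zero]
  -- additivity of f ∘ φ
  have Lφ : ∀ z w : F, f (φ z + φ w) = f (φ z) + f (φ w) := by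
    set c : A := star (1 - a) * star ⅟a with hc
    refine Lgen φ (fun z => ψ z <• c) ?_ ?_ ?_
    · intro z w; rw [CStarModuleRight.inner_op_smul_right, horth, zero_mul]
    · intro z w; rw [CStarModuleRight.inner_op_smul_left, hψφ, mul_zero]
    · intro z w
      rw [CStarModuleRight.inner_op_smul_right, CStarModuleRight.inner_op_smul_left]
      have hcs : star c = ⅟a * (1 - a) := by
        rw [hc, star_mul, star_star, star_star]
      rw [hcs, hc]
      calc inner (𝕜 := A) (φ z) (φ w)
          = (⅟a * a) * inner (𝕜 := A) (φ z) (φ w) * (star a * star ⅟a) := by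
            rw [invOf_mul_self, hstara, one_mul, mul_one]
        _ = ⅟a * (a * inner (𝕜 := A) (φ z) (φ w) * star a) * star ⅟a := by
            noncomm_ring
        _ = ⅟a * ((1 - a) * inner (𝕜 := A) (ψ z) (ψ w) * star (1 - a)) * star ⅟a := by
            rw [heq]
        _ = ⅟a * (1 - a) * inner (𝕜 := A) (ψ z) (ψ w) * (star (1 - a) * star ⅟a) := by
            noncomm_ring
  -- additivity of f ∘ ψ
  have Lψ : ∀ z w : F, f (ψ z + ψ w) = f (ψ z) + f (ψ w) := by
    set c : A := star a * star ⅟(1 - a) with hc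
    refine Lgen ψ (fun z => φ z <• c) ?_ ?_ ?_
    · intro z w; rw [CStarModuleRight.inner_op_smul_right, hψφ, zero_mul]
    · intro z w; rw [CStarModuleRight.inner_op_smul_left, horth, mul_zero]
    · intro z w
      rw [CStarModuleRight.inner_op_smul_right, CStarModuleRight.inner_op_smul_left]
      have hcs : star c = ⅟(1 - a) * a := by
        rw [hc, star_mul, star_star, star_star]
      rw [hcs, hc]
      calc inner (𝕜 := A) (ψ z) (ψ w)
          = (⅟(1 - a) * (1 - a)) * inner (𝕜 := A) (ψ z) (ψ w)
              * (star (1 - a) * star ⅟(1 - a)) := by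
            rw [invOf_mul_self, hstarb, one_mul, mul_one]
        _ = ⅟(1 - a) * ((1 - a) * inner (𝕜 := A) (ψ z) (ψ w) * star (1 - a))
              * star ⅟(1 - a) := by noncomm_ring
        _ = ⅟(1 - a) * (a * inner (𝕜 := A) (φ z) (φ w) * star a) * star ⅟(1 - a) := by
            rw [heq]
        _ = ⅟(1 - a) * a * inner (𝕜 := A) (φ z) (φ w) * (star a * star ⅟(1 - a)) := by
            noncomm_ring
  -- final assembly
  rintro z₁ z₂ ⟨x₁, y₁, rfl⟩ ⟨x₂, y₂, rfl⟩
  have e : φ x₁ + ψ y₁ + (φ x₂ + ψ y₂) = (φ x₁ + φ x₂) + (ψ y₁ + ψ y₂) := by abel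
  have o : inner (𝕜 := A) (φ x₁ + φ x₂) (ψ y₁ + ψ y₂) = 0 := by
    rw [CStarModuleRight.inner_add_left, CStarModuleRight.inner_add_right, CStarModuleRight.inner_add_right, horth, horth, horth, horth]
    abel
  rw [e, L1 _ _ o, Lφ, Lψ, L1 _ _ (horth x₁ y₁), L1 _ _ (horth x₂ y₂)]
  abel
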